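/- Let (X,f) be a dynamical system that is Δ-a-transitive for a = (a₁,…,a_r) ∈ ℕ^r_* (a₁<⋯<a_r). Then the set of points x ∈ X such that (x,…,x) is a transitive point of (X^r, f^{a₁}×⋯×f^{a_r}) is a dense Gδ (residual) subset of X. -/

import Mathlib

open Set Function

/-- The product map `f^{(a)} = f^{a₁} × ⋯ × f^{a_r}` on `X^r`. -/
def prodIter {X : Type*} (f : X → X) {r : ℕ} (a : Fin r → ℕ) :
    (Fin r → X) → (Fin r → X) :=
  fun y i => f^[a i] (y i)

/-- `(X,f)` is Δ-transitive with respect to the vector `a`: some diagonal point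
`(x,…,x)` has dense orbit in `X^r` under `f^{a₁} × ⋯ × f^{a_r}`. -/
def DeltaTrans {X : Type*} [TopologicalSpace X] (f : X → X) {r : ℕ}
    (a : Fin r → ℕ) : Prop :=
  ∃ x : X, Dense {z : Fin r → X | ∃ n : ℕ, 0 < n ∧
    (prodIter f a)^[n] (fun _ => x) = z}

lemma prodIter_iterate {X : Type*} (f : X → X) {r : ℕ} (a : Fin r → ℕ) (n : ℕ)
    (w : Fin r → X) : (prodIter f a)^[n] w = fun i => (f^[a i])^[n] (w i) := by
  induction n with
  | zero => rfl
  | succ n ih =>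
      rw [Function.iterate_succ_apply', ih]
      funext i
      simp [prodIter, Function.iterate_succ_apply']

theorem stmt10 {X : Type*} [MetricSpace X] [CompactSpace X] (f : X → X)
    (hf : Continuous f) {r : ℕ} (a : Fin r → ℕ) (ha : ∀ i, 0 < a i)
    (hmono : StrictMono a) (hΔ : DeltaTrans f a) :
    Dense {x : X | Dense {z : Fin r → X | ∃ n : ℕ, 0 < n ∧
        (prodIter f a)^[n] (fun _ => x) = z}} ∧
      IsGδ {x : X | Dense {z : Fin r → X | ∃ n : ℕ, 0 < n ∧
        (prodIter f a)^[n] (fun _ => x) = z}} := by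
  obtain ⟨x₀, hx₀⟩ := hΔ
  set Y := Fin r → X
  set F := prodIter f a with hF
  -- continuity of F
  have hFc : Continuous F := by
    refine continuous_pi fun i => ?_
    exact (hf.iterate (a i)).comp (continuous_apply i)
  have hmapc : ∀ n : ℕ, Continuous fun x : X => F^[n] (fun _ => x) := by
    intro n
    exact (hFc.iterate n).comp (continuous_pi fun _ => continuous_id)
  -- countable basis of Y
  obtain ⟨b, hbc, hbne, hbasis⟩ := TopologicalSpace.exists_countable_basis Y
  -- the open sets T U
  set T : Set Y → Set X := fun U => {x | ∃ n : ℕ, 0 < n ∧ F^[n] (fun _ => x) ∈ U}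
  have hTopen : ∀ U : Set Y, IsOpen U → IsOpen (T U) := by
    intro U hU
    have : T U = ⋃ n ∈ {n : ℕ | 0 < n}, (fun x : X => F^[n] (fun _ => x)) ⁻¹' U := by
      ext x; simp [T]
    rw [this]
    exact isOpen_biUnion fun n _ => hU.preimage (hmapc n)
  -- density of each T U for U open nonempty
  have hTdense : ∀ U : Set Y, IsOpen U → U.Nonempty → Dense (T U) := by
    intro U hU hUne
    rw [dense_iff_inter_open]
    intro V hV hVne
    rcases Nat.eq_zero_or_pos r with hr | hr
    · -- r = 0 : Y is a subsingleton
      obtain ⟨v, hv⟩ := hVne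
      obtain ⟨u, hu⟩ := hUne
      refine ⟨v, hv, 1, one_pos, ?_⟩
      subst hr
      have : (F^[1] (fun _ => v)) = u := funext fun i => absurd i.2 (by omega)
      rwa [this]
    · set i₀ : Fin r := ⟨0, hr⟩
      -- F is surjective
      have hFsurj : Surjective F := by
        have hsub : {z : Y | ∃ n : ℕ, 0 < n ∧ F^[n] (fun _ => x₀) = z} ⊆ range F := by
          rintro z ⟨n, hn, rfl⟩
          obtain ⟨m, rfl⟩ := Nat.exists_eq_succ_of_ne_zero hn.ne'
          exact ⟨F^[m] (fun _ => x₀), (Function.iterate_succ_apply' F m _).symm⟩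
        have hcl : IsClosed (range F) :=
          (isCompact_range hFc).isClosed
        intro z
        have := hx₀.mono hsub
        have : range F = univ := hcl.closure_eq ▸ (this.closure_eq)
        exact (range_eq_univ.mp this) z
      have hfsurj : Surjective f := by
        intro y
        obtain ⟨w, hw⟩ := hFsurj (fun _ => y)
        have : f^[a i₀] (w i₀) = y := congrFun hw i₀
        obtain ⟨k, hk⟩ := Nat.exists_eq_succ_of_ne_zero (ha i₀).ne'
        refine ⟨f^[k] (w i₀), ?_⟩
        rw [← Function.iterate_succ_apply' f k, ← hk, this]
      -- find a point of V of the form f^[c] x₀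
      have hV' : IsOpen {z : Y | z i₀ ∈ V} := hV.preimage (continuous_apply i₀)
      obtain ⟨z, hz1, m, hm, hz2⟩ := hx₀.inter_open_nonempty _ hV'
        ⟨fun _ => hVne.choose, hVne.choose_spec⟩
      subst hz2
      have hxV : f^[a i₀ * m] x₀ ∈ V := by
        simpa [hF, prodIter_iterate, ← Function.iterate_mul] using (show (F^[m] (fun _ => x₀)) i₀ ∈ V from hz1)
      set c := a i₀ * m with hc
      set x := f^[c] x₀ with hx
      refine ⟨x, hxV, ?_⟩
      -- G = coordinatewise f^[c] has dense range
      set G : Y → Y := fun z i => f^[c] (z i) with hG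
      have hGc : Continuous G := continuous_pi fun i => (hf.iterate c).comp (continuous_apply i)
      have hGsurj : Surjective G := fun z =>
        ⟨fun i => (hfsurj.iterate c (z i)).choose,
          funext fun i => (hfsurj.iterate c (z i)).choose_spec⟩
      have hGd : Dense (G '' {z : Y | ∃ n : ℕ, 0 < n ∧ F^[n] (fun _ => x₀) = z}) :=
        (hGsurj.denseRange).dense_image hGc hx₀
      obtain ⟨w, hwU, z', ⟨n, hn, hz'⟩, hw⟩ := hGd.inter_open_nonempty U hU hUne
      refine ⟨n, hn, ?_⟩
      have : F^[n] (fun _ => x) = w := by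
        rw [← hw, ← hz']
        funext i
        simp only [hF, hG, hx, prodIter_iterate, ← Function.iterate_mul,
          ← Function.iterate_add_apply]
        rw [Nat.add_comm]
      rwa [this]
  -- the set equality
  have hset : {x : X | Dense {z : Y | ∃ n : ℕ, 0 < n ∧ F^[n] (fun _ => x) = z}}
      = ⋂ U ∈ b, T U := by
    ext x
    simp only [mem_setOf_eq, mem_iInter]
    constructor
    · intro hd U hU
      obtain ⟨z, hz1, hz2⟩ := hd.inter_open_nonempty U (hbasis.isOpen hU)
        (nonempty_iff_ne_empty.2 fun h => hbne (h ▸ hU))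
      obtain ⟨n, hn, rfl⟩ := hz2
      exact ⟨n, hn, hz1⟩
    · intro h
      rw [hbasis.dense_iff]
      intro o ho hone
      obtain ⟨n, hn, hmem⟩ := h o ho
      exact ⟨F^[n] (fun _ => x), hmem, n, hn, rfl⟩
  rw [hset]
  constructor
  · refine dense_biInter_of_isOpen (fun U hU => hTopen U (hbasis.isOpen hU)) hbc
      (fun U hU => hTdense U (hbasis.isOpen hU)
        (nonempty_iff_ne_empty.2 fun h => hbne (h ▸ hU)))
  · exact IsGδ.biInter hbc fun U hU => (hTopen U (hbasis.isOpen hU)).isGδ
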